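/- Let p be an odd prime and A a finite commutative group with Monoid.exponent A = p^e. Let g be a natural number whose residue class generates the unit group (ZMod (p^e))ˣ. Let σ be the ℤ-algebra endomorphism of the group algebra MonoidAlgebra ℤ A induced by the group homomorphism a ↦ a^g. Then the kernel of the ℤ-linear map σ − id and the cokernel (MonoidAlgebra ℤ A) ⧸ range(σ − id) are each free ℤ-modules of rank equal to the number of cyclic subgroups of A; that is, each is ℤ-linearly isomorphic to ({C : Subgroup A // IsCyclic C} →₀ ℤ). -/

import Mathlib

open Subgroup Finsupp

section Aux

variable {A : Type*} [CommGroup A] [Finite A]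

omit [Finite A] in
lemma aux_isCyclic_zpowers (a : A) : IsCyclic (Subgroup.zpowers a) := by
  refine ⟨⟨⟨a, Subgroup.mem_zpowers a⟩, fun x => ?_⟩⟩
  obtain ⟨k, hk⟩ := x.2
  exact ⟨k, Subtype.ext (by simpa using hk)⟩

omit [Finite A] in
lemma aux_zpowers_coe_gen (C : Subgroup A) (hC : IsCyclic C) : ∃ a : A, Subgroup.zpowers a = C := by
  obtain ⟨c, hc⟩ := hC.exists_generator
  refine ⟨(c : A), le_antisymm ((zpowers_le).mpr c.2) fun x hx => ?_⟩
  obtain ⟨k, hk⟩ := hc ⟨x, hx⟩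
  exact ⟨k, by simpa using congrArg Subtype.val hk⟩

lemma aux_zpowers_pow_eq {p e : ℕ} (hexp : Monoid.exponent A = p ^ e)
    (a : A) (m : ℕ) (hm : Nat.Coprime m (p ^ e)) :
    Subgroup.zpowers (a ^ m) = Subgroup.zpowers a := by
  have hord : orderOf a ∣ p ^ e := hexp ▸ Monoid.order_dvd_exponent a
  have hcm : Nat.Coprime m (orderOf a) := Nat.Coprime.coprime_dvd_right hord hm
  refine le_antisymm ((zpowers_le).mpr ⟨(m : ℤ), by simp⟩) ((zpowers_le).mpr ?_)
  haveI : NeZero (orderOf a) := ⟨(orderOf_pos a).ne'⟩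
  set N := orderOf a with hN
  let v : (ZMod N)ˣ := ZMod.unitOfCoprime m hcm
  set c := ((v⁻¹ : (ZMod N)ˣ) : ZMod N).val with hc
  have hmc : m * c ≡ 1 [MOD N] := by
    have : ((m * c : ℕ) : ZMod N) = ((1 : ℕ) : ZMod N) := by
      push_cast
      rw [hc, ZMod.natCast_val, ZMod.cast_id]
      show ((v : ZMod N)) * _ = 1
      rw [← Units.val_mul, mul_inv_cancel, Units.val_one]
    exact (ZMod.natCast_eq_natCast_iff _ _ _).mp this
  have : (a ^ m) ^ c = a := by
    rw [← pow_mul]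
    calc a ^ (m * c) = a ^ 1 := (pow_eq_pow_iff_modEq).mpr hmc
    _ = a := pow_one a
  exact mem_powers_iff_mem_zpowers.mp ⟨c, this⟩

lemma aux_key_forward {p e g : ℕ} (hp : p.Prime)
    (hexp : Monoid.exponent A = p ^ e)
    (hg : ∀ u : (ZMod (p ^ e))ˣ, ∃ j : ℕ, (u : ZMod (p ^ e)) = (g : ZMod (p ^ e)) ^ j)
    (a b : A) (h : Subgroup.zpowers a = Subgroup.zpowers b) :
    ∃ j : ℕ, b = a ^ g ^ j := by
  have hord : orderOf a ∣ p ^ e := hexp ▸ Monoid.order_dvd_exponent a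
  have hb : b ∈ Submonoid.powers a :=
    mem_powers_iff_mem_zpowers.mpr (h ▸ mem_zpowers b)
  obtain ⟨n, hn⟩ := hb
  have hn : a ^ n = b := hn
  have hords : orderOf a = orderOf b := by
    rw [← Nat.card_zpowers, ← Nat.card_zpowers, h]
  have hgcd : Nat.gcd (orderOf a) n = 1 := by
    have h1 : orderOf (a ^ n) = orderOf a / Nat.gcd (orderOf a) n := orderOf_pow a
    rw [hn, ← hords] at h1
    rcases (Nat.div_eq_self.mp h1.symm) with h0 | h1'
    · exact absurd h0 (orderOf_pos a).ne'
    · exact h1'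
  by_cases hoa : orderOf a = 1
  · have ha1 : a = 1 := orderOf_eq_one_iff.mp hoa
    refine ⟨0, ?_⟩
    rw [← hn, ha1, one_pow, one_pow]
  · obtain ⟨k, hk, hoak⟩ := (Nat.dvd_prime_pow hp).mp hord
    have hk0 : k ≠ 0 := by rintro rfl; simp [hoak] at hoa
    have hpord : p ∣ orderOf a := hoak ▸ dvd_pow_self p hk0
    have hnp : Nat.Coprime n p :=
      ((Nat.coprime_comm.mp hgcd).coprime_dvd_right hpord)
    have hne : Nat.Coprime n (p ^ e) := hnp.pow_right e
    obtain ⟨j, hj⟩ := hg (ZMod.unitOfCoprime n hne)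
    rw [ZMod.coe_unitOfCoprime] at hj
    have hmod : n ≡ g ^ j [MOD p ^ e] := by
      rw [← ZMod.natCast_eq_natCast_iff]
      push_cast
      exact hj
    have : a ^ n = a ^ (g ^ j) :=
      (pow_eq_pow_iff_modEq).mpr (hmod.of_dvd hord)
    exact ⟨j, by rw [← hn, this]⟩

lemma aux_cop (p e g : ℕ) (hp : p.Prime) (hp2 : p ≠ 2)
    (hg : ∀ u : (ZMod (p ^ e))ˣ, ∃ j : ℕ, (u : ZMod (p ^ e)) = (g : ZMod (p ^ e)) ^ j) :
    Nat.Coprime g (p ^ e) := by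
  rcases Nat.eq_zero_or_pos e with rfl | he
  · simp [Nat.coprime_one_right]
  · have h2 : 2 < p ^ e := by
      have h3 : 3 ≤ p := lt_of_le_of_ne hp.two_le (Ne.symm hp2)
      calc 2 < 3 := by norm_num
      _ ≤ p := h3
      _ ≤ p ^ e := Nat.le_self_pow he.ne' p
    haveI : Fact (2 < p ^ e) := ⟨h2⟩
    haveI : NeZero (p ^ e) := ⟨by positivity⟩
    obtain ⟨j, hj⟩ := hg (-1)
    have hj' : (-1 : ZMod (p ^ e)) = (g : ZMod (p ^ e)) ^ j := by simpa using hj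
    have hjne : j ≠ 0 := by
      rintro rfl
      rw [pow_zero] at hj'
      exact ZMod.neg_one_ne_one hj'
    have hu : IsUnit ((g : ZMod (p ^ e)) ^ j) := by
      rw [← hj']; exact (isUnit_one).neg
    rw [isUnit_pow_iff hjne] at hu
    exact (ZMod.isUnit_iff_coprime g (p ^ e)).mp hu

end Aux

set_option maxHeartbeats 1000000 in
theorem ker_and_coker_of_adams_operation_on_group_algebra
    (p : ℕ) (hp : p.Prime) (hp2 : p ≠ 2)
    (A : Type*) [CommGroup A] [Finite A] (e : ℕ)
    (hexp : Monoid.exponent A = p ^ e)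
    (g : ℕ)
    (hg : ∀ u : (ZMod (p ^ e))ˣ, ∃ j : ℕ, (u : ZMod (p ^ e)) = (g : ZMod (p ^ e)) ^ j) :
    Nonempty
      ((LinearMap.ker
          ((MonoidAlgebra.mapDomainAlgHom ℤ ℤ (powMonoidHom g : A →* A)).toLinearMap
            - LinearMap.id)) ≃ₗ[ℤ]
        ({C : Subgroup A // IsCyclic C} →₀ ℤ)) ∧
    Nonempty
      ((MonoidAlgebra ℤ A ⧸
          LinearMap.range
            ((MonoidAlgebra.mapDomainAlgHom ℤ ℤ (powMonoidHom g : A →* A)).toLinearMap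
              - LinearMap.id)) ≃ₗ[ℤ]
        ({C : Subgroup A // IsCyclic C} →₀ ℤ)) := by
  classical
  set D : MonoidAlgebra ℤ A →ₗ[ℤ] MonoidAlgebra ℤ A :=
    (MonoidAlgebra.mapDomainAlgHom ℤ ℤ (powMonoidHom g : A →* A)).toLinearMap
      - LinearMap.id with hD
  have hcop : Nat.Coprime g (p ^ e) := aux_cop p e g hp hp2 hg
  set τfun : A → A := fun a => a ^ g with hτfun
  have hσapp : ∀ x : MonoidAlgebra ℤ A,
      (D x).coeff = (Finsupp.mapDomain τfun x.coeff - x.coeff : A →₀ ℤ) := fun x => rfl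
  set q : A → {C : Subgroup A // IsCyclic C} :=
    fun a => ⟨Subgroup.zpowers a, aux_isCyclic_zpowers a⟩ with hq
  have hq_pow : ∀ (a : A) (m : ℕ), Nat.Coprime m (p ^ e) → q (a ^ m) = q a :=
    fun a m hm => Subtype.ext (aux_zpowers_pow_eq hexp a m hm)
  have key : ∀ a b : A, q a = q b → ∃ j : ℕ, b = a ^ g ^ j :=
    fun a b h => aux_key_forward hp hexp hg a b (congrArg Subtype.val h)
  have hqsurj : Function.Surjective q := by
    intro C
    obtain ⟨a, ha⟩ := aux_zpowers_coe_gen C.1 C.2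
    exact ⟨a, Subtype.ext ha⟩
  set s : {C : Subgroup A // IsCyclic C} → A := Function.surjInv hqsurj with hs
  have hqs : ∀ C, q (s C) = C := fun C => Function.surjInv_eq hqsurj C
  have hDsingle : ∀ c : A,
      D (MonoidAlgebra.single c (1:ℤ)) = MonoidAlgebra.single (c ^ g) 1 - MonoidAlgebra.single c 1 := by
    intro c
    apply MonoidAlgebra.coeff_injective
    rw [hσapp]
    exact congrArg (· - Finsupp.single c (1:ℤ)) Finsupp.mapDomain_single
  have tele : ∀ (a : A) (j : ℕ),
      MonoidAlgebra.single (a ^ g ^ j) (1:ℤ) - MonoidAlgebra.single a 1 ∈ LinearMap.range D := by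
    intro a j
    induction j with
    | zero => simpa using zero_mem _
    | succ j ih =>
      have hstep : a ^ g ^ (j+1) = (a ^ g ^ j) ^ g := by rw [← pow_mul, pow_succ]
      rw [hstep, ← sub_add_sub_cancel _ (MonoidAlgebra.single (a ^ g ^ j) (1:ℤ)) _]
      exact add_mem ⟨MonoidAlgebra.single (a ^ g ^ j) 1, hDsingle _⟩ ih
  constructor
  · -- kernel
    have hτinj : Function.Injective τfun := by
      intro a b hab
      have h1 : (a * b⁻¹) ^ g = 1 := by
        simp only [hτfun] at hab
        rw [mul_pow, inv_pow, hab, mul_inv_cancel]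
      have h2 : orderOf (a * b⁻¹) ∣ g := orderOf_dvd_of_pow_eq_one h1
      have h3 : orderOf (a * b⁻¹) ∣ p ^ e := hexp ▸ Monoid.order_dvd_exponent _
      have h4 : orderOf (a * b⁻¹) = 1 := by
        have hd := Nat.dvd_gcd h2 h3
        rw [Nat.Coprime.gcd_eq_one hcop] at hd
        exact Nat.dvd_one.mp hd
      have := orderOf_eq_one_iff.mp h4
      rwa [mul_inv_eq_one] at this
    set τ : A ≃ A := Equiv.ofBijective τfun (Finite.injective_iff_bijective.mp hτinj)
      with hτ
    have hτcoe : τfun = ⇑τ := rfl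
    have hqτsymm : ∀ b : A, q (τ.symm b) = q b := by
      intro b
      have h1 : q ((τ.symm b) ^ g) = q (τ.symm b) := hq_pow _ g hcop
      have h2 : (τ.symm b) ^ g = b := τ.apply_symm_apply b
      rw [h2] at h1
      exact h1.symm
    have hconst : ∀ f : MonoidAlgebra ℤ A, f ∈ LinearMap.ker D →
        ∀ a b : A, q a = q b → f.coeff a = f.coeff b := by
      intro f hf a b hab
      have hfix : Finsupp.mapDomain τfun f.coeff = f.coeff := by
        have h0 := congrArg MonoidAlgebra.coeff (LinearMap.mem_ker.mp hf)
        rw [hσapp, MonoidAlgebra.coeff_zero] at h0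
        exact sub_eq_zero.mp h0
      have h1 : ∀ c : A, f.coeff (c ^ g) = f.coeff c := by
        intro c
        conv_lhs => rw [← hfix]
        show (Finsupp.mapDomain τfun f.coeff) (τ c) = f.coeff c
        rw [hτcoe, Finsupp.mapDomain_equiv_apply, Equiv.symm_apply_apply]
      have h2 : ∀ (c : A) (j : ℕ), f.coeff (c ^ g ^ j) = f.coeff c := by
        intro c j
        induction j with
        | zero => simp
        | succ j ih =>
          rw [show c ^ g ^ (j+1) = (c ^ g ^ j) ^ g from by rw [← pow_mul, pow_succ],
            h1, ih]
      obtain ⟨j, hj⟩ := key a b hab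
      rw [hj, h2]
    have hmem : ∀ h : ({C : Subgroup A // IsCyclic C} →₀ ℤ),
        (MonoidAlgebra.ofCoeff (Finsupp.equivFunOnFinite.symm (fun a => h (q a))) : MonoidAlgebra ℤ A)
          ∈ LinearMap.ker D := by
      intro h
      have h0 : (Finsupp.mapDomain τfun
          (Finsupp.equivFunOnFinite.symm fun a => h (q a)) : A →₀ ℤ)
          = Finsupp.equivFunOnFinite.symm fun a => h (q a) := by
        refine Finsupp.ext fun b => ?_
        rw [hτcoe, Finsupp.mapDomain_equiv_apply,
          Finsupp.equivFunOnFinite_symm_apply_apply, Finsupp.equivFunOnFinite_symm_apply_apply,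
          hqτsymm]
      exact LinearMap.mem_ker.mpr (MonoidAlgebra.coeff_injective ((hσapp _).trans
        (by rw [MonoidAlgebra.coeff_ofCoeff, h0, sub_self, MonoidAlgebra.coeff_zero])))
    refine ⟨{
      toFun := fun f => Finsupp.equivFunOnFinite.symm (fun C => (f : MonoidAlgebra ℤ A).coeff (s C))
      map_add' := ?_
      map_smul' := ?_
      invFun := fun h => ⟨MonoidAlgebra.ofCoeff (Finsupp.equivFunOnFinite.symm (fun a => h (q a))), hmem h⟩
      left_inv := ?_
      right_inv := ?_ }⟩
    · intro f₁ f₂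
      refine Finsupp.ext fun C => ?_
      rw [Finsupp.add_apply, Finsupp.equivFunOnFinite_symm_apply_apply,
        Finsupp.equivFunOnFinite_symm_apply_apply, Finsupp.equivFunOnFinite_symm_apply_apply]
      exact Finsupp.add_apply _ _ _
    · intro r f
      refine Finsupp.ext fun C => ?_
      rw [RingHom.id_apply, Finsupp.smul_apply, Finsupp.equivFunOnFinite_symm_apply_apply,
        Finsupp.equivFunOnFinite_symm_apply_apply]
      exact Finsupp.smul_apply _ _ _
    · intro f
      apply Subtype.ext
      apply MonoidAlgebra.coeff_injective
      refine Finsupp.ext fun a => ?_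
      rw [MonoidAlgebra.coeff_ofCoeff, Finsupp.equivFunOnFinite_symm_apply_apply, Finsupp.equivFunOnFinite_symm_apply_apply]
      exact hconst _ f.2 _ _ (hqs (q a))
    · intro h
      refine Finsupp.ext fun C => ?_
      rw [Finsupp.equivFunOnFinite_symm_apply_apply, MonoidAlgebra.coeff_ofCoeff,
        Finsupp.equivFunOnFinite_symm_apply_apply, hqs]
  · -- cokernel
    set F : MonoidAlgebra ℤ A →ₗ[ℤ] ({C : Subgroup A // IsCyclic C} →₀ ℤ) :=
      Finsupp.lmapDomain ℤ ℤ q ∘ₗ (MonoidAlgebra.coeffLinearEquiv ℤ).toLinearMap with hF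
    have hFapp : ∀ x : MonoidAlgebra ℤ A, F x = Finsupp.mapDomain q x.coeff := fun x => rfl
    have hFsurj : Function.Surjective F := by
      intro y
      refine ⟨MonoidAlgebra.ofCoeff (Finsupp.mapDomain s y), ?_⟩
      rw [hFapp, MonoidAlgebra.coeff_ofCoeff, ← Finsupp.mapDomain_comp]
      rw [show q ∘ s = id from funext hqs, Finsupp.mapDomain_id]
    have hrange : LinearMap.range D = LinearMap.ker F := by
      apply le_antisymm
      · rintro _ ⟨x, rfl⟩
        rw [LinearMap.mem_ker, hFapp, hσapp, Finsupp.mapDomain_sub, ← Finsupp.mapDomain_comp,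
          show q ∘ τfun = q from funext fun a => hq_pow a g hcop, sub_self]
      · intro x hx
        have hx0 : Finsupp.mapDomain q x.coeff = 0 := by
          rw [← hFapp]; exact LinearMap.mem_ker.mp hx
        have hrx : Finsupp.mapDomain (fun a => s (q a)) x.coeff = 0 := by
          rw [show (fun a : A => s (q a)) = s ∘ q from rfl, Finsupp.mapDomain_comp, hx0,
            Finsupp.mapDomain_zero]
        have hgen : ∀ y : MonoidAlgebra ℤ A,
            (y - MonoidAlgebra.ofCoeff (Finsupp.mapDomain (fun a => s (q a)) y.coeff) : MonoidAlgebra ℤ A)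
              ∈ LinearMap.range D := by
          intro y
          induction y using MonoidAlgebra.induction_linear with
          | zero => rw [MonoidAlgebra.coeff_zero, Finsupp.mapDomain_zero, MonoidAlgebra.ofCoeff_zero,
              sub_zero]; exact zero_mem _
          | add f₁ f₂ h₁ h₂ =>
            rw [MonoidAlgebra.coeff_add, Finsupp.mapDomain_add, MonoidAlgebra.ofCoeff_add]
            have hsum := add_mem h₁ h₂
            convert hsum using 1
            abel
          | single a b =>
            rw [MonoidAlgebra.coeff_single, Finsupp.mapDomain_single, MonoidAlgebra.ofCoeff_single]
            obtain ⟨j, hj⟩ := key a (s (q a)) (hqs (q a)).symm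
            have h1 : MonoidAlgebra.single (s (q a)) (1:ℤ) - MonoidAlgebra.single a 1
                ∈ LinearMap.range D := by
              rw [hj]; exact tele a j
            have h2 := Submodule.smul_mem (LinearMap.range D) (-b) h1
            have heq : (MonoidAlgebra.single a b - MonoidAlgebra.single (s (q a)) b : MonoidAlgebra ℤ A)
                = (-b) • ((MonoidAlgebra.single (s (q a)) (1:ℤ)) - MonoidAlgebra.single a 1) := by
              rw [smul_sub, MonoidAlgebra.smul_single, MonoidAlgebra.smul_single]
              simp only [smul_eq_mul, mul_one, MonoidAlgebra.single_neg]
              abel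
            rw [heq]
            exact h2
        have := hgen x
        rwa [hrx, MonoidAlgebra.ofCoeff_zero, sub_zero] at this
    exact ⟨(Submodule.quotEquivOfEq _ _ hrange).trans
      (LinearMap.quotKerEquivOfSurjective F hFsurj)⟩
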